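/- arXiv:1309.2109 — 2 statements merged into one kernel-verified Lean document; each statement's English description precedes it below -/
import Mathlib

section
/- For all n ≥ 0, the Daehee number D_n equals B_n^{(n+2)}(1), the value at x = 1 of the Bernoulli polynomial of order n+2 and degree n. -/
open PowerSeries Finset

noncomputable def logOneAdd : PowerSeries ℚ :=
  PowerSeries.mk fun k => if k = 0 then 0 else (-1 : ℚ)^(k+1) / k

noncomputable def onePow (x : ℚ) : PowerSeries ℚ :=
  PowerSeries.mk fun k => (∏ i ∈ Finset.range k, (x - (i : ℚ))) / (Nat.factorial k : ℚ)

noncomputable def expX (x : ℚ) : PowerSeries ℚ :=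
  PowerSeries.mk fun k => x ^ k / (Nat.factorial k : ℚ)

/- ### Auxiliary development: `dhH = (e^t - 1)/t`, `dhU = t/(e^t - 1)` -/

noncomputable def dhH : PowerSeries ℚ := PowerSeries.mk fun k => 1 / (Nat.factorial (k+1) : ℚ)
noncomputable def dhP : PowerSeries ℚ := PowerSeries.mk fun k => 1 / (Nat.factorial (k+2) : ℚ)
noncomputable def dhU : PowerSeries ℚ := dhH⁻¹

lemma dhH_const : constantCoeff dhH = 1 := by
  simp [dhH, ← coeff_zero_eq_constantCoeff]

lemma dhHU : dhH * dhU = 1 :=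
  PowerSeries.mul_inv_cancel _ (by rw [dhH_const]; norm_num)

lemma dhU_const : constantCoeff dhU = 1 := by
  rw [dhU, PowerSeries.constantCoeff_inv, dhH_const]; norm_num

lemma X_mul_dhH : X * dhH = PowerSeries.exp ℚ - 1 := by
  ext k
  cases k with
  | zero => simp [dhH, coeff_exp]
  | succ n => simp [dhH, coeff_succ_X_mul, coeff_exp, Nat.succ_ne_zero]

lemma X_mul_dhP : X * dhP = dhH - 1 := by
  ext k
  cases k with
  | zero => simp [dhH, dhP, coeff_zero_X_mul, ← coeff_zero_eq_constantCoeff]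
  | succ n => simp [dhH, dhP, coeff_succ_X_mul, Nat.succ_ne_zero]

lemma dh_exp_eq : PowerSeries.exp ℚ = X * dhH + 1 := by rw [X_mul_dhH]; ring

lemma dh_deriv_exp : d⁄dX ℚ (PowerSeries.exp ℚ) = PowerSeries.exp ℚ := by
  ext n
  rw [coeff_derivative]
  simp [coeff_exp, Nat.factorial_succ]
  field_simp

lemma dh_deriv_H : d⁄dX ℚ dhH = dhH - dhP := by
  have h1 := congrArg (d⁄dX ℚ) X_mul_dhH
  rw [Derivation.leibniz, map_sub, dh_deriv_exp, derivative_X] at h1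
  simp only [smul_eq_mul, mul_one] at h1
  have h2 : d⁄dX ℚ (1 : PowerSeries ℚ) = 0 := (d⁄dX ℚ).map_one_eq_zero
  rw [h2, sub_zero, dh_exp_eq] at h1
  apply mul_left_cancel₀ (X_ne_zero (R := ℚ))
  linear_combination h1 + X_mul_dhP

lemma dh_deriv_U : d⁄dX ℚ dhU = -dhU + dhP * dhU^2 := by
  have h1 : d⁄dX ℚ dhU = -dhU^2 * d⁄dX ℚ dhH := by
    rw [dhU]; exact PowerSeries.derivative_inv' _
  rw [h1, dh_deriv_H]
  linear_combination (-dhU) * dhHU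

/-- the key recursion for coefficients of powers of `dhU`. -/
lemma dhRec (n m : ℕ) :
    coeff (m+1) (dhU^(n+1)) * ((m:ℚ)+1) =
      ((n:ℚ)+1) * ((coeff (m+1) (dhU^(n+1)) - coeff (m+1) (dhU^(n+2))) -
        coeff m (dhU^(n+1))) := by
  have e1 : d⁄dX ℚ (dhU^(n+1)) = C ((n:ℚ)+1) * (dhP * dhU^(n+2) - dhU^(n+1)) := by
    rw [Derivation.leibniz_pow, dh_deriv_U]
    have hc : ((n+1 : ℕ) : PowerSeries ℚ) = C ((n:ℚ)+1) := by
      rw [← map_natCast (C (R := ℚ)) (n+1)]; push_cast; ring_nf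
    rw [nsmul_eq_mul, hc]
    have hn : n + 1 - 1 = n := rfl
    rw [hn]
    simp only [smul_eq_mul]
    ring
  have e2 : coeff m (dhP * dhU^(n+2)) =
      coeff (m+1) (dhU^(n+1)) - coeff (m+1) (dhU^(n+2)) := by
    have h3 : X * dhP * dhU = 1 - dhU := by
      rw [X_mul_dhP]; linear_combination dhHU
    have hX : X * (dhP * dhU^(n+2)) = dhU^(n+1) - dhU^(n+2) := by
      calc X * (dhP * dhU^(n+2)) = (X * dhP * dhU) * dhU^(n+1) := by ring
        _ = (1 - dhU) * dhU^(n+1) := by rw [h3]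
        _ = dhU^(n+1) - dhU^(n+2) := by ring
    rw [← coeff_succ_X_mul m (dhP * dhU^(n+2)), hX, map_sub]
  have e4 := congrArg (coeff m) e1
  rw [coeff_derivative, coeff_C_mul, map_sub, e2] at e4
  -- combine
  linear_combination e4

lemma dhC : ∀ n : ℕ, coeff n (dhU^(n+1)) = (-1)^n := by
  intro n
  induction n with
  | zero =>
    rw [pow_one, coeff_zero_eq_constantCoeff_apply, dhU_const]
    norm_num
  | succ k ih =>
    have h := dhRec k k
    rw [ih] at h
    have hk : ((k:ℚ)+1) ≠ 0 := by positivity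
    apply mul_left_cancel₀ hk
    rw [show k+1+1 = k+2 from rfl]
    linear_combination h

noncomputable def dhHar (m : ℕ) : ℚ := ∑ k ∈ Finset.range m, 1/((k:ℚ)+1)

lemma dhHar_succ (m : ℕ) : dhHar (m+1) = dhHar m + 1/((m:ℚ)+1) :=
  Finset.sum_range_succ _ _

lemma dhG : ∀ m : ℕ, coeff m (dhU^(m+2)) = (-1)^m * dhHar (m+1) := by
  intro m
  induction m with
  | zero =>
    rw [coeff_zero_eq_constantCoeff_apply, map_pow, dhU_const, dhHar]
    norm_num
  | succ k ih =>
    have h := dhRec (k+1) k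
    have hC' : coeff (k+1) (dhU^(k+2)) = (-1)^(k+1) := by
      have := dhC (k+1); rwa [show k+1+1 = k+2 from rfl] at this
    rw [show k+1+1 = k+2 from rfl, show k+1+2 = k+3 from rfl] at h
    rw [hC', ih] at h
    rw [show k+1+2 = k+3 from rfl, dhHar_succ]
    have hk : ((k:ℚ)+1+1) ≠ 0 := by positivity
    apply mul_left_cancel₀ hk
    have hinv : (((k:ℚ))+1+1) * (1/(((k:ℚ))+1+1)) = 1 := by field_simp
    push_cast at h ⊢
    linear_combination h - (-1)^(k+1) * hinv

lemma dh_exp_mul_U : PowerSeries.exp ℚ * dhU = X + dhU := by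
  rw [dh_exp_eq]; linear_combination X * dhHU

lemma dhE (n : ℕ) :
    coeff n (PowerSeries.exp ℚ * dhU^(n+2)) = (-1)^n / ((n:ℚ)+1) := by
  have key : PowerSeries.exp ℚ * dhU^(n+2) = X * dhU^(n+1) + dhU^(n+2) := by
    calc PowerSeries.exp ℚ * dhU^(n+2) = (PowerSeries.exp ℚ * dhU) * dhU^(n+1) := by ring
      _ = (X + dhU) * dhU^(n+1) := by rw [dh_exp_mul_U]
      _ = X * dhU^(n+1) + dhU^(n+2) := by ring
  rw [key, map_add]
  cases n with
  | zero =>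
    rw [coeff_zero_X_mul, coeff_zero_eq_constantCoeff_apply, map_pow, dhU_const]
    norm_num
  | succ k =>
    rw [coeff_succ_X_mul]
    have g1 := dhG k
    have g2 := dhG (k+1)
    rw [show k+1+1 = k+2 from rfl, g1, g2, dhHar_succ (k+1)]
    push_cast
    ring

theorem daehee_eq_higher_bernoulli (D : ℕ → ℚ) (OB : ℕ → ℚ → ℕ → ℚ)
    (hD : PowerSeries.mk (fun n => D n / (Nat.factorial n : ℚ)) * PowerSeries.X = logOneAdd) (hOB : ∀ (α : ℕ) (x : ℚ), PowerSeries.mk (fun n => OB α x n / (Nat.factorial n : ℚ)) * (PowerSeries.exp ℚ - 1) ^ α = PowerSeries.X ^ α * expX x) :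
    ∀ n : ℕ, D n = OB (n + 2) 1 n := by
  intro n
  have hfact : (Nat.factorial n : ℚ) ≠ 0 := Nat.cast_ne_zero.mpr (Nat.factorial_ne_zero n)
  -- the Daehee number
  have hDn : D n / (Nat.factorial n : ℚ) = (-1)^n / ((n:ℚ)+1) := by
    have h := congrArg (coeff (n+1)) hD
    rw [mul_comm, coeff_succ_X_mul, coeff_mk] at h
    rw [h, logOneAdd, coeff_mk, if_neg (Nat.succ_ne_zero n)]
    push_cast
    ring
  -- the higher-order Bernoulli value
  have h0 := hOB (n+2) 1
  have hexpX1 : expX 1 = PowerSeries.exp ℚ := by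
    ext k
    simp [expX, coeff_exp, Algebra.algebraMap_self]
  rw [hexpX1, ← X_mul_dhH] at h0
  set f := PowerSeries.mk (fun k => OB (n+2) 1 k / (Nat.factorial k : ℚ)) with hf
  have h1 : f * dhH^(n+2) = PowerSeries.exp ℚ := by
    apply mul_left_cancel₀ (pow_ne_zero (n+2) (X_ne_zero (R := ℚ)))
    calc X^(n+2) * (f * dhH^(n+2)) = f * (X*dhH)^(n+2) := by ring
      _ = X^(n+2) * PowerSeries.exp ℚ := h0
  have h2 : f = PowerSeries.exp ℚ * dhU^(n+2) := by
    calc f = f * (dhH * dhU)^(n+2) := by rw [dhHU]; simp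
      _ = (f * dhH^(n+2)) * dhU^(n+2) := by ring
      _ = PowerSeries.exp ℚ * dhU^(n+2) := by rw [h1]
  have h3 : OB (n+2) 1 n / (Nat.factorial n : ℚ) = (-1)^n / ((n:ℚ)+1) := by
    have h4 := congrArg (coeff n) h2
    rw [hf, coeff_mk, dhE n] at h4
    exact h4
  have e := hDn.trans h3.symm
  have e2 := congrArg (· * (Nat.factorial n : ℚ)) e
  simpa [div_mul_cancel₀, hfact] using e2
end

section
/- For all n ≥ 0, the Daehee numbers of the second kind satisfy Ď_n = ∑_{l=0}^{n} s(n,l) (-1)^l B_l, where s(n,l) are the signed Stirling numbers of the first kind and B_l are the Bernoulli numbers. -/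
open PowerSeries Finset

lemma dL : d⁄dX ℚ logOneAdd = PowerSeries.mk fun k => (-1:ℚ)^k := by
  ext k
  rw [PowerSeries.coeff_derivative, logOneAdd, coeff_mk, coeff_mk]
  simp only [Nat.succ_ne_zero, if_false]
  push_cast
  field_simp
  ring

lemma geom : ((1 + X) * PowerSeries.mk fun k => (-1:ℚ)^k) = 1 := by
  ext n
  rw [add_mul, one_mul]
  cases n with
  | zero => simp
  | succ m =>
    rw [map_add, PowerSeries.coeff_succ_X_mul, coeff_mk, coeff_mk]
    simp [pow_succ]

lemma cL0 : constantCoeff logOneAdd = 0 := by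
  rw [← coeff_zero_eq_constantCoeff, logOneAdd, coeff_mk]; simp

lemma coeff_L_pow_zero {n l : ℕ} (h : n < l) : coeff n (logOneAdd ^ l) = 0 := by
  have hx : (X : ℚ⟦X⟧) ∣ logOneAdd := X_dvd_iff.mpr cL0
  have := pow_dvd_pow_of_dvd hx l
  exact (PowerSeries.X_pow_dvd_iff.mp this) n h

noncomputable def fallPoly (n : ℕ) : Polynomial ℚ :=
  ∏ i ∈ Finset.range n, (Polynomial.X - Polynomial.C (i:ℚ))

lemma eval_fallPoly (n : ℕ) (x : ℚ) : (fallPoly n).eval x = ∏ i ∈ range n, (x - (i:ℚ)) := by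
  simp [fallPoly, Polynomial.eval_prod]

lemma natDegree_fallPoly_le (n : ℕ) : (fallPoly n).natDegree ≤ n := by
  refine le_trans (Polynomial.natDegree_prod_le _ _) (le_trans (Finset.sum_le_sum
    (g := fun _ => 1) (fun i _ => le_trans (Polynomial.natDegree_sub_le _ _) (by simp))) (by simp))

lemma fallPoly_coeff_zero {n l : ℕ} (h : n < l) : (fallPoly n).coeff l = 0 :=
  Polynomial.coeff_eq_zero_of_natDegree_lt (lt_of_le_of_lt (natDegree_fallPoly_le n) h)

lemma fallPoly_succ (n : ℕ) : fallPoly (n+1) = fallPoly n * (Polynomial.X - Polynomial.C (n:ℚ)) := by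
  rw [fallPoly, Finset.prod_range_succ]; rfl

lemma fallPoly_rec (n m : ℕ) :
    (fallPoly (n+1)).coeff (m+1) = (fallPoly n).coeff m - n * (fallPoly n).coeff (m+1) := by
  rw [fallPoly_succ, mul_sub, Polynomial.coeff_sub, Polynomial.coeff_mul_X]
  simp [mul_comm]

lemma fallPoly_coeff0 (n : ℕ) : (fallPoly (n+1)).coeff 0 = 0 := by
  rw [Polynomial.coeff_zero_eq_eval_zero, eval_fallPoly]
  exact Finset.prod_eq_zero (Finset.mem_range.mpr (Nat.succ_pos n)) (by simp)

lemma key : ∀ n l, ((n.factorial : ℚ)) * coeff n (logOneAdd ^ l) =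
    (l.factorial : ℚ) * (fallPoly n).coeff l := by
  intro n
  induction n with
  | zero =>
      intro l
      cases l with
      | zero => simp [fallPoly]
      | succ m =>
          rw [coeff_zero_eq_constantCoeff, map_pow, cL0, fallPoly_coeff_zero (Nat.succ_pos m)]
          simp
  | succ n ih =>
      intro l
      cases l with
      | zero =>
          rw [pow_zero, fallPoly_coeff0]
          simp [PowerSeries.coeff_one]
      | succ m =>
          have hder : (1 + X) * (d⁄dX ℚ (logOneAdd ^ (m+1))) =
              ((m+1 : ℕ) : ℚ⟦X⟧) * logOneAdd ^ m := by
            rw [Derivation.leibniz_pow, Nat.add_sub_cancel, smul_eq_mul, nsmul_eq_mul, dL]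
            rw [show ((1:ℚ⟦X⟧)+X) * (((m+1:ℕ):ℚ⟦X⟧) * (logOneAdd^m * PowerSeries.mk fun k => (-1:ℚ)^k))
              = ((m+1:ℕ):ℚ⟦X⟧) * (logOneAdd^m * ((1+X) * PowerSeries.mk fun k => (-1:ℚ)^k)) from by ring,
              geom, mul_one]
          have hXg : coeff n (X * d⁄dX ℚ (logOneAdd ^ (m+1)))
              = (n:ℚ) * coeff n (logOneAdd ^ (m+1)) := by
            cases n with
            | zero =>
                rw [coeff_zero_eq_constantCoeff, map_mul, constantCoeff_X, zero_mul]
                simp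
            | succ p =>
                rw [PowerSeries.coeff_succ_X_mul, PowerSeries.coeff_derivative]
                push_cast
                ring
          have h3 : ((n:ℚ)+1) * coeff (n+1) (logOneAdd^(m+1)) + (n:ℚ) * coeff n (logOneAdd^(m+1))
              = ((m:ℚ)+1) * coeff n (logOneAdd ^ m) := by
            have h := congrArg (coeff n) hder
            rw [add_mul, one_mul, map_add, hXg, PowerSeries.coeff_derivative,
              show (((m+1:ℕ):ℚ⟦X⟧)) = PowerSeries.C ((m:ℚ)+1) from by
                rw [← map_natCast (PowerSeries.C) (m+1)]; push_cast; ring_nf,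
              coeff_C_mul] at h
            linarith
          rw [fallPoly_rec]
          have ih1 := ih m
          have ih2 := ih (m+1)
          push_cast [Nat.factorial_succ] at ih1 ih2 ⊢
          linear_combination ((n.factorial : ℚ)) * h3 + ((m:ℚ)+1) * ih1 - (n:ℚ) * ih2

lemma coeff_aeval (P : Polynomial ℚ) (n : ℕ) :
    coeff n (Polynomial.aeval logOneAdd P) =
      ∑ l ∈ range (n+1), P.coeff l * coeff n (logOneAdd ^ l) := by
  rw [Polynomial.aeval_def, Polynomial.eval₂_eq_sum_range, map_sum]
  have hterm : ∀ i, coeff n ((algebraMap ℚ ℚ⟦X⟧) (P.coeff i) * logOneAdd ^ i)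
      = P.coeff i * coeff n (logOneAdd ^ i) := by
    intro i
    rw [PowerSeries.algebraMap_apply, coeff_C_mul]
    simp
  simp_rw [hterm]
  have h1 : ∑ i ∈ range (P.natDegree+1), P.coeff i * coeff n (logOneAdd ^ i)
      = ∑ i ∈ range (max (P.natDegree+1) (n+1)), P.coeff i * coeff n (logOneAdd ^ i) :=
    Finset.sum_subset (Finset.range_subset_range.mpr (le_max_left _ _)) (fun i _ hi => by
      simp only [Finset.mem_range, not_lt] at hi
      rw [Polynomial.coeff_eq_zero_of_natDegree_lt (by omega), zero_mul])
  have h2 : ∑ i ∈ range (n+1), P.coeff i * coeff n (logOneAdd ^ i)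
      = ∑ i ∈ range (max (P.natDegree+1) (n+1)), P.coeff i * coeff n (logOneAdd ^ i) :=
    Finset.sum_subset (Finset.range_subset_range.mpr (le_max_right _ _)) (fun i _ hi => by
      simp only [Finset.mem_range, not_lt] at hi
      rw [coeff_L_pow_zero (by omega), mul_zero])
  rw [h1, h2]

noncomputable def substL (f : ℚ⟦X⟧) : ℚ⟦X⟧ :=
  PowerSeries.mk fun n => coeff n (Polynomial.aeval logOneAdd (trunc (n+1) f))

lemma coeff_substL (f : ℚ⟦X⟧) (n : ℕ) :
    coeff n (substL f) = ∑ l ∈ range (n+1), coeff l f * coeff n (logOneAdd ^ l) := by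
  rw [substL, coeff_mk, coeff_aeval]
  refine Finset.sum_congr rfl fun l hl => ?_
  rw [coeff_trunc]
  simp [Finset.mem_range.mp hl]

lemma coeff_aeval_trunc (f : ℚ⟦X⟧) {n N : ℕ} (h : n < N) :
    coeff n (Polynomial.aeval logOneAdd (trunc N f)) = coeff n (substL f) := by
  rw [coeff_aeval, coeff_substL]
  refine Finset.sum_congr rfl fun l hl => ?_
  have hl' := Finset.mem_range.mp hl
  rw [coeff_trunc, if_pos (by omega)]

lemma substL_mul (f g : ℚ⟦X⟧) : substL (f * g) = substL f * substL g := by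
  ext n
  rw [PowerSeries.coeff_mul]
  have h1 : ∀ p ∈ antidiagonal n, coeff p.1 (substL f) * coeff p.2 (substL g)
      = coeff p.1 (Polynomial.aeval logOneAdd (trunc (n+1) f)) *
        coeff p.2 (Polynomial.aeval logOneAdd (trunc (n+1) g)) := by
    intro p hp
    have hp' := Finset.HasAntidiagonal.mem_antidiagonal.mp hp
    rw [coeff_aeval_trunc f (by omega), coeff_aeval_trunc g (by omega)]
  rw [Finset.sum_congr rfl h1, ← PowerSeries.coeff_mul, ← map_mul]
  rw [substL, coeff_mk, coeff_aeval, coeff_aeval]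
  refine Finset.sum_congr rfl fun l hl => ?_
  have hln : l < n+1 := Finset.mem_range.mp hl
  congr 1
  rw [coeff_trunc, Polynomial.coeff_mul, if_pos hln, PowerSeries.coeff_mul]
  refine Finset.sum_congr rfl fun q hq => ?_
  have hq' := Finset.HasAntidiagonal.mem_antidiagonal.mp hq
  rw [coeff_trunc, coeff_trunc, if_pos (by omega), if_pos (by omega)]

lemma substL_one : substL 1 = 1 := by
  ext n
  rw [coeff_substL]
  rw [Finset.sum_eq_single_of_mem 0 (Finset.mem_range.mpr (Nat.succ_pos n))
    (fun l _ hl => by rw [PowerSeries.coeff_one, if_neg hl, zero_mul])]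
  simp

lemma substL_X : substL X = logOneAdd := by
  ext n
  rw [coeff_substL]
  cases n with
  | zero =>
      simp [logOneAdd]
  | succ p =>
      rw [Finset.sum_eq_single_of_mem 1 (Finset.mem_range.mpr (by omega))
        (fun l _ hl => by rw [PowerSeries.coeff_X, if_neg hl, zero_mul])]
      simp

lemma substL_add (f g : ℚ⟦X⟧) : substL (f + g) = substL f + substL g := by
  ext n
  rw [map_add, coeff_substL, coeff_substL, coeff_substL, ← Finset.sum_add_distrib]
  exact Finset.sum_congr rfl fun l _ => by rw [map_add, add_mul]

lemma substL_neg (f : ℚ⟦X⟧) : substL (-f) = - substL f := by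
  ext n
  rw [map_neg, coeff_substL, coeff_substL]
  simp [Finset.sum_neg_distrib]

lemma substL_sub (f g : ℚ⟦X⟧) : substL (f - g) = substL f - substL g := by
  rw [sub_eq_add_neg, substL_add, substL_neg, sub_eq_add_neg]

lemma prod_neg (n : ℕ) : ∏ i ∈ range n, ((-1:ℚ) - i) = (-1)^n * n.factorial := by
  induction n with
  | zero => simp
  | succ m ih =>
      rw [Finset.prod_range_succ, ih, Nat.factorial_succ]
      push_cast
      ring

lemma substL_En : substL (rescale (-1) (PowerSeries.exp ℚ)) = PowerSeries.mk fun n => (-1:ℚ)^n := by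
  ext n
  rw [coeff_substL, coeff_mk]
  have hn : ((Nat.factorial n : ℚ)) ≠ 0 := by exact_mod_cast n.factorial_ne_zero
  have hterm : ∀ l ∈ range (n+1),
      coeff l (rescale (-1) (PowerSeries.exp ℚ)) * coeff n (logOneAdd ^ l)
      = (fallPoly n).coeff l * (-1:ℚ)^l / n.factorial := by
    intro l _
    have hlf : ((Nat.factorial l : ℚ)) ≠ 0 := by exact_mod_cast l.factorial_ne_zero
    have hc : coeff n (logOneAdd ^ l)
        = (l.factorial : ℚ) * (fallPoly n).coeff l / n.factorial := by
      rw [eq_div_iff hn]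
      linear_combination key n l
    rw [coeff_rescale, PowerSeries.coeff_exp, hc]
    simp only [Algebra.algebraMap_self, RingHom.id_apply]
    field_simp
  rw [Finset.sum_congr rfl hterm, ← Finset.sum_div]
  rw [show ∑ l ∈ range (n+1), (fallPoly n).coeff l * (-1:ℚ)^l = (-1)^n * n.factorial from ?_]
  · field_simp
  · rw [← Polynomial.eval_eq_sum_range' (lt_of_le_of_lt (natDegree_fallPoly_le n) (Nat.lt_succ_self n)),
      eval_fallPoly, _root_.prod_neg]

theorem daehee2_stirling_bernoulli (Dh B : ℕ → ℚ) (s : ℕ → ℕ → ℚ)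
    (hDh : PowerSeries.mk (fun n => Dh n / (Nat.factorial n : ℚ)) * PowerSeries.X = (1 + PowerSeries.X) * logOneAdd) (hB : PowerSeries.mk (fun l => B l / (Nat.factorial l : ℚ)) * (PowerSeries.exp ℚ - 1) = PowerSeries.X) (hs : ∀ (n : ℕ) (x : ℚ), ∏ i ∈ Finset.range n, (x - (i : ℚ)) = ∑ l ∈ Finset.range (n + 1), s n l * x ^ l) :
    ∀ n : ℕ, Dh n = ∑ l ∈ Finset.range (n + 1), s n l * (-1 : ℚ) ^ l * B l := by
  have hsS : ∀ n l, l < n + 1 → s n l = (fallPoly n).coeff l := by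
    intro n l hl
    have hpoly : fallPoly n = ∑ k ∈ range (n+1), Polynomial.C (s n k) * Polynomial.X ^ k := by
      apply Polynomial.funext
      intro x
      rw [eval_fallPoly, hs n x]
      simp [Polynomial.eval_finset_sum]
    rw [hpoly, Polynomial.finset_sum_coeff]
    simp only [Polynomial.coeff_C_mul, Polynomial.coeff_X_pow]
    rw [Finset.sum_eq_single_of_mem l (Finset.mem_range.mpr hl)
      (fun k _ hk => by rw [if_neg (fun h => hk h.symm), mul_zero])]
    simp
  have hB' := congrArg (rescale (-1 : ℚ)) hB
  rw [map_mul, map_sub, map_one, rescale_neg_one_X] at hB'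
  have hB'' := congrArg substL hB'
  rw [substL_mul, substL_sub, substL_one, substL_neg, substL_X, substL_En] at hB''
  set sB := substL (rescale (-1) (PowerSeries.mk fun l => B l / (Nat.factorial l : ℚ))) with hsB
  have h5 : sB * X = (1 + X) * logOneAdd := by
    linear_combination (-(1+(X:ℚ⟦X⟧))) * hB'' + sB * geom
  intro n
  have hn : ((Nat.factorial n : ℚ)) ≠ 0 := by exact_mod_cast n.factorial_ne_zero
  have h6 : Dh n / (Nat.factorial n : ℚ) = coeff n sB := by
    have h := congrArg (coeff (n+1)) (hDh.trans h5.symm)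
    rwa [PowerSeries.coeff_succ_mul_X, PowerSeries.coeff_succ_mul_X, coeff_mk] at h
  have h7 : coeff n sB = (∑ l ∈ range (n+1), s n l * (-1:ℚ)^l * B l) / n.factorial := by
    rw [hsB, coeff_substL, Finset.sum_div]
    refine Finset.sum_congr rfl fun l hl => ?_
    have hl' := Finset.mem_range.mp hl
    have hlf : ((Nat.factorial l : ℚ)) ≠ 0 := by exact_mod_cast l.factorial_ne_zero
    have hc : coeff n (logOneAdd ^ l)
        = (l.factorial : ℚ) * (fallPoly n).coeff l / n.factorial := by
      rw [eq_div_iff hn]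
      linear_combination key n l
    rw [coeff_rescale, coeff_mk, hc, hsS n l hl']
    field_simp
  rw [h7] at h6
  rw [div_eq_div_iff hn hn] at h6
  exact mul_right_cancel₀ hn h6
end
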